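/- If the characteristic p of the field k satisfies p = 0 or p > w_0 + w_1 + ... + w_d, then the complex C_•(w_0,...,w_d) is exact (has vanishing homology in all degrees). -/
import Mathlib


/-!
The arithmetic complex `C_•(w_0,…,w_d)`.

Edges of the path graph are labeled `1,…,d`; edge `i` joins vertices `i-1` and `i`
(vertices are `0,…,d`, with weights `w 0, …, w d`).  A subset `J ⊆ {1,…,d}` cuts the
path along the edges *not* in `J`, decomposing it into intervals.
-/

/-- The left endpoint (vertex) of the interval containing edge `j` in the decomposition
determined by `J`: the least vertex `v` such that all edges strictly between `v` and `j`
belong to `J`. -/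
noncomputable def ivLeft (J : Finset ℕ) (j : ℕ) : ℕ :=
  sInf {v : ℕ | ∀ k ∈ Finset.Ioo v j, k ∈ J}

/-- The right endpoint (vertex) of the interval containing edge `j`. -/
noncomputable def ivRight (d : ℕ) (J : Finset ℕ) (j : ℕ) : ℕ :=
  sSup {v : ℕ | v ≤ d ∧ ∀ k ∈ Finset.Ioc j v, k ∈ J}

/-- `w(J,j)`: the total weight of the interval containing edge `j`. -/
noncomputable def wtTot (w : ℕ → ℕ) (d : ℕ) (J : Finset ℕ) (j : ℕ) : ℕ :=
  ∑ v ∈ Finset.Icc (ivLeft J j) (ivRight d J j), w v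

/-- `w'(J,j)`: the weight of the left subinterval obtained by removing edge `j`. -/
noncomputable def wtL (w : ℕ → ℕ) (J : Finset ℕ) (j : ℕ) : ℕ :=
  ∑ v ∈ Finset.Icc (ivLeft J j) (j - 1), w v

/-- `s(J,j) = #{i : i < j, i ∉ J}`. -/
def sgn (J : Finset ℕ) (j : ℕ) : ℕ :=
  ((Finset.Ico 1 j).filter (fun i => i ∉ J)).card

/-- The differential of the arithmetic complex `C_•(w_0,…,w_d)`, on the free vector
space with basis `e_J` indexed by subsets `J ⊆ {1,…,d}`:
`∂(e_J) = ∑_{j ∈ J} (-1)^{s(J,j)} C(w(J,j), w'(J,j)) e_{J∖{j}}`. -/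
noncomputable def bnd (K : Type*) [Field K] (w : ℕ → ℕ) (d : ℕ) :
    ({J : Finset ℕ // J ⊆ Finset.Icc 1 d} →₀ K) →ₗ[K]
    ({J : Finset ℕ // J ⊆ Finset.Icc 1 d} →₀ K) :=
  Finsupp.lsum K fun J =>
    LinearMap.toSpanSingleton K _
      (∑ j ∈ J.1, ((-1 : K) ^ sgn J.1 j * ((wtTot w d J.1 j).choose (wtL w J.1 j) : K)) •
        Finsupp.single ⟨J.1.erase j, fun x hx => J.2 (Finset.mem_of_mem_erase hx)⟩ (1 : K))



section aux
open Finset Nat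
lemma cast_choose_ne_zero (K : Type*) [Field K] {W a b : ℕ}
    (hchar : ringChar K = 0 ∨ W < ringChar K) (hba : b ≤ a) (haW : a ≤ W) :
    ((a.choose b : ℕ) : K) ≠ 0 := by
  rcases hchar with h0 | hp
  · haveI : CharP K 0 := h0 ▸ ringChar.charP K
    haveI := CharP.charP_to_charZero K
    exact Nat.cast_ne_zero.mpr (Nat.choose_pos hba).ne'
  · set p := ringChar K with hpdef
    have hp' : p.Prime := (CharP.char_is_prime_or_zero K p).resolve_right (by omega)
    haveI : CharP K p := ringChar.charP K
    rw [Ne, CharP.cast_eq_zero_iff K p]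
    intro hdvd
    have hdf : a.choose b ∣ a ! :=
      ⟨b ! * (a-b)!, by rw [← Nat.choose_mul_factorial_mul_factorial hba]; ring⟩
    have := (Nat.Prime.dvd_factorial hp').mp (hdvd.trans hdf)
    omega


variable {d j : ℕ} {J : Finset ℕ}

lemma Rset_bdd (d : ℕ) (J : Finset ℕ) (j : ℕ) :
    BddAbove {v : ℕ | v ≤ d ∧ ∀ k ∈ Finset.Ioc j v, k ∈ J} := ⟨d, fun _ hv => hv.1⟩

lemma Rset_nonempty (d : ℕ) (J : Finset ℕ) (j : ℕ) :
    {v : ℕ | v ≤ d ∧ ∀ k ∈ Finset.Ioc j v, k ∈ J}.Nonempty :=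
  ⟨0, by simp only [Set.mem_setOf_eq]; exact ⟨Nat.zero_le d, fun k hk => by simp at hk⟩⟩

lemma ivRight_mem (d : ℕ) (J : Finset ℕ) (j : ℕ) :
    ivRight d J j ≤ d ∧ ∀ k ∈ Finset.Ioc j (ivRight d J j), k ∈ J :=
  Nat.sSup_mem (Rset_nonempty d J j) (Rset_bdd d J j)

lemma ivRight_le_d (d : ℕ) (J : Finset ℕ) (j : ℕ) : ivRight d J j ≤ d := (ivRight_mem d J j).1

lemma le_ivRight (hjd : j ≤ d) : j ≤ ivRight d J j :=
  le_csSup (Rset_bdd d J j) ⟨hjd, fun k hk => by simp at hk⟩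

lemma ivLeft_spec (J : Finset ℕ) (j : ℕ) : ∀ k ∈ Finset.Ioo (ivLeft J j) j, k ∈ J :=
  Nat.sInf_mem (⟨j, fun k hk => by simp at hk⟩ :
    {v : ℕ | ∀ k ∈ Finset.Ioo v j, k ∈ J}.Nonempty)

lemma ivLeft_one (J : Finset ℕ) : ivLeft J 1 = 0 :=
  Nat.le_zero.mp (Nat.sInf_le (fun k hk => by simp at hk; omega))

lemma wtL_one (w : ℕ → ℕ) (J : Finset ℕ) : wtL w J 1 = w 0 := by
  rw [wtL, ivLeft_one]; simp

lemma ivRight_insert_one (hj1 : 1 ≤ j) : ivRight d (insert 1 J) j = ivRight d J j := by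
  unfold ivRight
  congr 1
  ext v
  simp only [Set.mem_setOf_eq]
  constructor
  · rintro ⟨hvd, h⟩
    refine ⟨hvd, fun k hk => ?_⟩
    rcases Finset.mem_insert.mp (h k hk) with h' | h'
    · simp only [Finset.mem_Ioc] at hk; omega
    · exact h'
  · rintro ⟨hvd, h⟩
    exact ⟨hvd, fun k hk => Finset.mem_insert_of_mem (h k hk)⟩

lemma sum_Icc_split (w : ℕ → ℕ) {a b c : ℕ} (h1 : a ≤ b + 1) (h2 : b ≤ c) :
    ∑ v ∈ Finset.Icc a c, w v = ∑ v ∈ Finset.Icc a b, w v + ∑ v ∈ Finset.Icc (b+1) c, w v := by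
  have hu : Finset.Icc a b ∪ Finset.Icc (b+1) c = Finset.Icc a c := by
    ext v; simp only [Finset.mem_union, Finset.mem_Icc]; omega
  have hd : Disjoint (Finset.Icc a b) (Finset.Icc (b+1) c) := by
    rw [Finset.disjoint_left]
    intro x hx hx'
    simp only [Finset.mem_Icc] at hx hx'
    omega
  rw [← hu, Finset.sum_union hd]

/-- The key binomial identity for the homotopy. -/
lemma coeff_identity (w : ℕ → ℕ) (hJ : J ⊆ Finset.Icc 1 d) (h1 : 1 ∉ J) (hj : j ∈ J) :
    (wtTot w d (insert 1 J) j).choose (wtL w (insert 1 J) j) *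
      (wtTot w d (insert 1 (J.erase j)) 1).choose (wtL w (insert 1 (J.erase j)) 1) =
    (wtTot w d J j).choose (wtL w J j) *
      (wtTot w d (insert 1 J) 1).choose (wtL w (insert 1 J) 1) := by
  have hj1d : 1 ≤ j ∧ j ≤ d := by simpa [Finset.mem_Icc] using hJ hj
  have hj2 : 2 ≤ j := by rcases Nat.lt_or_ge j 2 with h | h; · interval_cases j <;> simp_all
                         · exact h
  by_cases hgap : ∀ k ∈ Finset.Ioo 1 j, k ∈ J
  · -- no gap between edge 1 and edge j
    have hAlj : ivLeft (insert 1 J) j = 0 := by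
      apply Nat.le_zero.mp (Nat.sInf_le _)
      intro k hk
      simp only [Finset.mem_Ioo] at hk
      by_cases hk1 : k = 1
      · subst hk1; exact Finset.mem_insert_self _ _
      · exact Finset.mem_insert_of_mem (hgap k (by simp only [Finset.mem_Ioo]; omega))
    have hJlj : ivLeft J j = 1 := by
      have hle : ivLeft J j ≤ 1 := Nat.sInf_le hgap
      by_contra h
      have h0 : ivLeft J j = 0 := by omega
      exact h1 (ivLeft_spec J j 1 (by rw [h0]; simp only [Finset.mem_Ioo]; omega))
    set r := ivRight d J j with hrdef
    have hArj : ivRight d (insert 1 J) j = r := ivRight_insert_one (by omega)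
    have hrmem := ivRight_mem d J j
    have hjr : j ≤ r := le_ivRight hj1d.2
    have hAr1 : ivRight d (insert 1 J) 1 = r := by
      apply le_antisymm
      · calc ivRight d (insert 1 J) 1 ≤ ivRight d (insert 1 J) j := by
              apply csSup_le_csSup (Rset_bdd d (insert 1 J) j) (Rset_nonempty d (insert 1 J) 1)
              rintro v ⟨hvd, h⟩
              refine ⟨hvd, fun k hk => h k ?_⟩
              simp only [Finset.mem_Ioc] at hk ⊢; omega
          _ = r := hArj
      · apply le_csSup (Rset_bdd d (insert 1 J) 1)
        refine ⟨hrmem.1, fun k hk => ?_⟩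
        simp only [Finset.mem_Ioc] at hk
        rcases lt_trichotomy k j with h' | h' | h'
        · exact Finset.mem_insert_of_mem (hgap k (by simp only [Finset.mem_Ioo]; omega))
        · subst h'; exact Finset.mem_insert_of_mem hj
        · exact Finset.mem_insert_of_mem (hrmem.2 k (by simp only [Finset.mem_Ioc]; omega))
    have hBr1 : ivRight d (insert 1 (J.erase j)) 1 = j - 1 := by
      apply le_antisymm
      · apply csSup_le (Rset_nonempty d (insert 1 (J.erase j)) 1)
        rintro v ⟨hvd, h⟩
        by_contra hc
        push_neg at hc
        have hjv : j ∈ Finset.Ioc 1 v := by simp only [Finset.mem_Ioc]; omega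
        rcases Finset.mem_insert.mp (h j hjv) with h' | h'
        · omega
        · exact absurd h' (Finset.notMem_erase j J)
      · apply le_csSup (Rset_bdd d (insert 1 (J.erase j)) 1)
        refine ⟨by omega, fun k hk => ?_⟩
        simp only [Finset.mem_Ioc] at hk
        exact Finset.mem_insert_of_mem (Finset.mem_erase.mpr
          ⟨by omega, hgap k (by simp only [Finset.mem_Ioo]; omega)⟩)
    -- sums
    have s00 : ∑ v ∈ Finset.Icc 0 0, w v = w 0 := by simp
    have s1 : ∑ v ∈ Finset.Icc 0 r, w v
        = ∑ v ∈ Finset.Icc 0 0, w v + ∑ v ∈ Finset.Icc 1 r, w v :=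
      sum_Icc_split w (by omega) (by omega)
    have s2 : ∑ v ∈ Finset.Icc 1 r, w v
        = ∑ v ∈ Finset.Icc 1 (j-1), w v + ∑ v ∈ Finset.Icc j r, w v := by
      have := sum_Icc_split w (a := 1) (b := j-1) (c := r) (by omega) (by omega)
      rwa [show j - 1 + 1 = j by omega] at this
    have s3 : ∑ v ∈ Finset.Icc 0 (j-1), w v
        = ∑ v ∈ Finset.Icc 0 0, w v + ∑ v ∈ Finset.Icc 1 (j-1), w v :=
      sum_Icc_split w (by omega) (by omega)
    set a := w 0 with ha
    set m := ∑ v ∈ Finset.Icc 1 (j-1), w v with hm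
    set q := ∑ v ∈ Finset.Icc j r, w v with hq
    have eAtotj : wtTot w d (insert 1 J) j = a + m + q := by
      rw [wtTot, hAlj, hArj]; omega
    have eALj : wtL w (insert 1 J) j = a + m := by
      rw [wtL, hAlj]; omega
    have eJtotj : wtTot w d J j = m + q := by
      rw [wtTot, hJlj, ← hrdef]; omega
    have eJLj : wtL w J j = m := by rw [wtL, hJlj]
    have eAtot1 : wtTot w d (insert 1 J) 1 = a + m + q := by
      rw [wtTot, ivLeft_one, hAr1]; omega
    have eAL1 : wtL w (insert 1 J) 1 = a := wtL_one w _
    have eBtot1 : wtTot w d (insert 1 (J.erase j)) 1 = a + m := by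
      rw [wtTot, ivLeft_one, hBr1]; omega
    have eBL1 : wtL w (insert 1 (J.erase j)) 1 = a := wtL_one w _
    rw [eAtotj, eALj, eJtotj, eJLj, eAtot1, eAL1, eBtot1, eBL1]
    -- trinomial identity
    have pos : 0 < a ! * m ! * q ! :=
      Nat.mul_pos (Nat.mul_pos a.factorial_pos m.factorial_pos) q.factorial_pos
    apply Nat.eq_of_mul_eq_mul_right pos
    have h1' : (a+m+q).choose (a+m) * (a+m)! * q ! = (a+m+q)! := by
      have := Nat.choose_mul_factorial_mul_factorial (n := a+m+q) (k := a+m) (by omega)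
      simpa [show a+m+q-(a+m) = q by omega] using this
    have h2' : (a+m).choose a * a ! * m ! = (a+m)! := by
      have := Nat.choose_mul_factorial_mul_factorial (n := a+m) (k := a) (by omega)
      simpa [show a+m-a = m by omega] using this
    have h3' : (m+q).choose m * m ! * q ! = (m+q)! := by
      have := Nat.choose_mul_factorial_mul_factorial (n := m+q) (k := m) (by omega)
      simpa [show m+q-m = q by omega] using this
    have h4' : (a+m+q).choose a * a ! * (m+q)! = (a+m+q)! := by
      have := Nat.choose_mul_factorial_mul_factorial (n := a+m+q) (k := a) (by omega)
      simpa [show a+m+q-a = m+q by omega] using this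
    calc (a+m+q).choose (a+m) * (a+m).choose a * (a ! * m ! * q !)
        = (a+m+q).choose (a+m) * ((a+m).choose a * a ! * m !) * q ! := by ring
      _ = (a+m+q).choose (a+m) * (a+m)! * q ! := by rw [h2']
      _ = (a+m+q)! := h1'
      _ = (a+m+q).choose a * a ! * (m+q)! := h4'.symm
      _ = (a+m+q).choose a * a ! * ((m+q).choose m * m ! * q !) := by rw [h3']
      _ = (m+q).choose m * (a+m+q).choose a * (a ! * m ! * q !) := by ring
  · -- gap: some edge between 1 and j is missing
    push_neg at hgap
    obtain ⟨kk, hkkIoo, hkkJ⟩ := hgap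
    simp only [Finset.mem_Ioo] at hkkIoo
    have hglj : ivLeft (insert 1 J) j = ivLeft J j := by
      unfold ivLeft
      congr 1
      ext v
      simp only [Set.mem_setOf_eq]
      constructor
      · intro h k hk
        have hvkk : kk ≤ v := by
          by_contra hc
          push_neg at hc
          rcases Finset.mem_insert.mp (h kk (by simp only [Finset.mem_Ioo]; omega)) with h' | h'
          · omega
          · exact hkkJ h'
        rcases Finset.mem_insert.mp (h k hk) with h' | h'
        · simp only [Finset.mem_Ioo] at hk; omega
        · exact h'
      · intro h k hk
        exact Finset.mem_insert_of_mem (h k hk)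
    have hgrj : ivRight d (insert 1 J) j = ivRight d J j := ivRight_insert_one (by omega)
    have hgr1 : ivRight d (insert 1 J) 1 = ivRight d (insert 1 (J.erase j)) 1 := by
      unfold ivRight
      congr 1
      ext v
      simp only [Set.mem_setOf_eq]
      constructor
      · rintro ⟨hvd, h⟩
        have hvkk : v < kk := by
          by_contra hc
          push_neg at hc
          rcases Finset.mem_insert.mp (h kk (by simp only [Finset.mem_Ioc]; omega)) with h' | h'
          · omega
          · exact hkkJ h'
        refine ⟨hvd, fun k hk => ?_⟩
        simp only [Finset.mem_Ioc] at hk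
        rcases Finset.mem_insert.mp (h k (by simp only [Finset.mem_Ioc]; omega)) with h' | h'
        · omega
        · exact Finset.mem_insert_of_mem (Finset.mem_erase.mpr ⟨by omega, h'⟩)
      · rintro ⟨hvd, h⟩
        have hvkk : v < kk := by
          by_contra hc
          push_neg at hc
          rcases Finset.mem_insert.mp (h kk (by simp only [Finset.mem_Ioc]; omega)) with h' | h'
          · omega
          · exact hkkJ (Finset.mem_of_mem_erase h')
        refine ⟨hvd, fun k hk => ?_⟩
        simp only [Finset.mem_Ioc] at hk
        rcases Finset.mem_insert.mp (h k (by simp only [Finset.mem_Ioc]; omega)) with h' | h'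
        · omega
        · exact Finset.mem_insert_of_mem (Finset.mem_of_mem_erase h')
    have e1 : wtTot w d (insert 1 J) j = wtTot w d J j := by rw [wtTot, wtTot, hglj, hgrj]
    have e2 : wtL w (insert 1 J) j = wtL w J j := by rw [wtL, wtL, hglj]
    have e3 : wtTot w d (insert 1 (J.erase j)) 1 = wtTot w d (insert 1 J) 1 := by
      rw [wtTot, wtTot, ivLeft_one, ivLeft_one, hgr1]
    have e4 : wtL w (insert 1 (J.erase j)) 1 = wtL w (insert 1 J) 1 := by
      rw [wtL_one, wtL_one]
    rw [e1, e2, e3, e4]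


lemma sgn_one (J : Finset ℕ) : sgn J 1 = 0 := by simp [sgn]

lemma sgn_insert_one (h1 : 1 ∉ J) (hj2 : 2 ≤ j) : sgn J j = sgn (insert 1 J) j + 1 := by
  classical
  have hmem : 1 ∈ (Finset.Ico 1 j).filter (fun i => i ∉ J) := by
    simp only [mem_filter, mem_Ico]; exact ⟨⟨le_refl 1, by omega⟩, h1⟩
  have hset : (Finset.Ico 1 j).filter (fun i => i ∉ insert 1 J) =
      ((Finset.Ico 1 j).filter (fun i => i ∉ J)).erase 1 := by
    ext i
    simp only [mem_filter, mem_erase, mem_Ico, Finset.mem_insert]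
    constructor
    · rintro ⟨h, hi⟩; push_neg at hi; exact ⟨hi.1, h, hi.2⟩
    · rintro ⟨hne, h, hi⟩; exact ⟨h, by push_neg; exact ⟨hne, hi⟩⟩
  rw [sgn, sgn, hset, Finset.card_erase_add_one hmem]


lemma wtL_le_wtTot (w : ℕ → ℕ) (hj1 : 1 ≤ j) (hjd : j ≤ d) : wtL w J j ≤ wtTot w d J j := by
  apply Finset.sum_le_sum_of_subset
  apply Finset.Icc_subset_Icc_right
  have := le_ivRight (J := J) hjd; omega

lemma wtTot_le_total (w : ℕ → ℕ) (d : ℕ) (J : Finset ℕ) (j : ℕ) :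
    wtTot w d J j ≤ ∑ i ∈ Finset.range (d + 1), w i := by
  apply Finset.sum_le_sum_of_subset
  intro v hv
  simp only [Finset.mem_Icc] at hv
  simp only [Finset.mem_range]
  have := ivRight_le_d d J j; omega


lemma insert_one_subset {d : ℕ} (hd : 1 ≤ d) {J : Finset ℕ} (hJ : J ⊆ Finset.Icc 1 d) :
    insert 1 J ⊆ Finset.Icc 1 d := by
  intro x hx
  rcases Finset.mem_insert.mp hx with h | h
  · subst h; simp only [Finset.mem_Icc]; omega
  · exact hJ h

noncomputable def hvec (K : Type*) [Field K] (w : ℕ → ℕ) (d : ℕ) (hd : 1 ≤ d)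
    (J : {J : Finset ℕ // J ⊆ Finset.Icc 1 d}) :
    ({J : Finset ℕ // J ⊆ Finset.Icc 1 d} →₀ K) :=
  if 1 ∈ J.1 then 0 else
    (((wtTot w d (insert 1 J.1) 1).choose (wtL w (insert 1 J.1) 1) : K))⁻¹ •
      Finsupp.single ⟨insert 1 J.1, insert_one_subset hd J.2⟩ 1

noncomputable def hmt (K : Type*) [Field K] (w : ℕ → ℕ) (d : ℕ) (hd : 1 ≤ d) :
    ({J : Finset ℕ // J ⊆ Finset.Icc 1 d} →₀ K) →ₗ[K]
    ({J : Finset ℕ // J ⊆ Finset.Icc 1 d} →₀ K) :=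
  Finsupp.lsum K fun J => LinearMap.toSpanSingleton K _ (hvec K w d hd J)

lemma hmt_single (K : Type*) [Field K] (w : ℕ → ℕ) (d : ℕ) (hd : 1 ≤ d)
    (J : {J : Finset ℕ // J ⊆ Finset.Icc 1 d}) :
    hmt K w d hd (Finsupp.single J (1 : K)) = hvec K w d hd J := by
  rw [hmt, Finsupp.lsum_single, LinearMap.toSpanSingleton_apply, one_smul]

lemma bnd_single (K : Type*) [Field K] (w : ℕ → ℕ) (d : ℕ)
    (J : {J : Finset ℕ // J ⊆ Finset.Icc 1 d}) :
    bnd K w d (Finsupp.single J (1 : K)) =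
      ∑ j ∈ J.1, ((-1 : K) ^ sgn J.1 j * ((wtTot w d J.1 j).choose (wtL w J.1 j) : K)) •
        Finsupp.single ⟨J.1.erase j, fun x hx => J.2 (Finset.mem_of_mem_erase hx)⟩ (1 : K) := by
  rw [bnd, Finsupp.lsum_single, LinearMap.toSpanSingleton_apply, one_smul]

lemma homotopy_single (K : Type*) [Field K] (w : ℕ → ℕ) (d : ℕ) (hd : 1 ≤ d)
    (hchar : ringChar K = 0 ∨ ∑ i ∈ Finset.range (d + 1), w i < ringChar K)
    (J : {J : Finset ℕ // J ⊆ Finset.Icc 1 d}) :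
    bnd K w d (hmt K w d hd (Finsupp.single J 1)) +
      hmt K w d hd (bnd K w d (Finsupp.single J 1)) = Finsupp.single J 1 := by
  classical
  by_cases h1 : 1 ∈ J.1
  · -- `1 ∈ J`: only the `j = 1` term of `H ∂` survives.
    rw [hmt_single, hvec, if_pos h1, map_zero, zero_add, bnd_single, map_sum]
    have hterm : ∀ j ∈ J.1, j ≠ 1 →
        hmt K w d hd (((-1 : K) ^ sgn J.1 j * ((wtTot w d J.1 j).choose (wtL w J.1 j) : K)) •
          Finsupp.single ⟨J.1.erase j, fun x hx => J.2 (Finset.mem_of_mem_erase hx)⟩ (1 : K))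
          = 0 := by
      intro j hj hjne
      rw [map_smul, hmt_single, hvec, if_pos (Finset.mem_erase.mpr ⟨Ne.symm hjne, h1⟩),
        smul_zero]
    rw [Finset.sum_eq_single_of_mem 1 h1 hterm]
    rw [map_smul, hmt_single, hvec,
      if_neg (fun h => (Finset.notMem_erase 1 J.1) h)]
    have hins : insert 1 (J.1.erase 1) = J.1 := Finset.insert_erase h1
    have hsub : ∀ (p : insert 1 ((J.1 : Finset ℕ).erase 1) ⊆ Finset.Icc 1 d),
        (⟨insert 1 (J.1.erase 1), p⟩ : {J : Finset ℕ // J ⊆ Finset.Icc 1 d}) = J :=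
      fun p => Subtype.ext hins
    rw [hsub, hins, sgn_one, pow_zero, one_mul, smul_smul,
      mul_inv_cancel₀ (cast_choose_ne_zero K hchar
        (wtL_le_wtTot w le_rfl hd) (wtTot_le_total w d J.1 1)), one_smul]
  · -- `1 ∉ J`
    rw [hmt_single, hvec, if_neg h1, map_smul, bnd_single]
    have hA1 : (1 : ℕ) ∈ insert 1 J.1 := Finset.mem_insert_self 1 J.1
    rw [Finset.sum_insert h1]
    set cA1 : K := ((wtTot w d (insert 1 J.1) 1).choose (wtL w (insert 1 J.1) 1) : K) with hcA1
    have hcA1ne : cA1 ≠ 0 :=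
      cast_choose_ne_zero K hchar (wtL_le_wtTot w le_rfl hd)
        (wtTot_le_total w d (insert 1 J.1) 1)
    -- head term `j = 1`
    have hins : (insert 1 J.1).erase 1 = J.1 := Finset.erase_insert h1
    have hsub : ∀ (p : (insert 1 (J.1 : Finset ℕ)).erase 1 ⊆ Finset.Icc 1 d),
        (⟨(insert 1 J.1).erase 1, p⟩ : {J : Finset ℕ // J ⊆ Finset.Icc 1 d}) = J :=
      fun p => Subtype.ext hins
    rw [sgn_one, pow_zero, one_mul, hsub]
    rw [smul_add, smul_smul, inv_mul_cancel₀ hcA1ne, one_smul, add_assoc]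
    rw [add_eq_left]
    rw [bnd_single, map_sum, Finset.smul_sum, ← Finset.sum_add_distrib]
    apply Finset.sum_eq_zero
    intro j hj
    have hjne1 : j ≠ 1 := fun h => h1 (h ▸ hj)
    have hj1d : 1 ≤ j ∧ j ≤ d := by simpa [Finset.mem_Icc] using J.2 hj
    have hj2 : 2 ≤ j := by omega
    have h1er : (1 : ℕ) ∉ J.1.erase j := fun h => h1 (Finset.mem_of_mem_erase h)
    rw [map_smul, hmt_single, hvec, if_neg h1er]
    have hErIns : (insert 1 (J.1 : Finset ℕ)).erase j = insert 1 (J.1.erase j) :=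
      Finset.erase_insert_of_ne (Ne.symm hjne1)
    have hsub2 : ∀ (p : (insert 1 (J.1 : Finset ℕ)).erase j ⊆ Finset.Icc 1 d),
        (⟨(insert 1 (J.1 : Finset ℕ)).erase j, p⟩ : {J : Finset ℕ // J ⊆ Finset.Icc 1 d}) =
        ⟨insert 1 (J.1.erase j),
          insert_one_subset hd (fun x hx => J.2 (Finset.mem_of_mem_erase hx))⟩ :=
      fun p => Subtype.ext hErIns
    rw [hsub2]
    rw [smul_smul, smul_smul, ← add_smul]
    apply smul_eq_zero_of_left
    set s := sgn (insert 1 (J.1 : Finset ℕ)) j with hs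
    rw [sgn_insert_one h1 hj2, pow_succ]
    set cAj : K := ((wtTot w d (insert 1 J.1) j).choose (wtL w (insert 1 J.1) j) : K) with hcAj
    set cJj : K := ((wtTot w d J.1 j).choose (wtL w J.1 j) : K) with hcJj
    set cB : K := ((wtTot w d (insert 1 (J.1.erase j)) 1).choose
      (wtL w (insert 1 (J.1.erase j)) 1) : K) with hcB
    have hcBne : cB ≠ 0 :=
      cast_choose_ne_zero K hchar (wtL_le_wtTot w le_rfl hd)
        (wtTot_le_total w d (insert 1 (J.1.erase j)) 1)
    have key : cAj * cB = cJj * cA1 := by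
      rw [hcAj, hcJj, hcB, hcA1]
      exact_mod_cast congrArg (Nat.cast (R := K)) (coeff_identity w J.2 h1 hj)
    field_simp
    linear_combination ((-1 : K) ^ s) * key

lemma homotopy_eq (K : Type*) [Field K] (w : ℕ → ℕ) (d : ℕ) (hd : 1 ≤ d)
    (hchar : ringChar K = 0 ∨ ∑ i ∈ Finset.range (d + 1), w i < ringChar K) :
    (bnd K w d).comp (hmt K w d hd) + (hmt K w d hd).comp (bnd K w d) = LinearMap.id := by
  apply Finsupp.lhom_ext
  intro J b
  have h := homotopy_single K w d hd hchar J
  have hb : Finsupp.single J b = b • Finsupp.single J (1 : K) := by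
    rw [Finsupp.smul_single, smul_eq_mul, mul_one]
  rw [hb]
  simp only [LinearMap.add_apply, LinearMap.comp_apply, LinearMap.id_apply, map_smul]
  rw [h]


end aux

/-- if `char K = 0` or `char K > w_0 + ⋯ + w_d`, then the complex
`C_•(w_0,…,w_d)` is exact: every cycle supported in homological degree `k`
(i.e. on subsets of cardinality `k`) is the boundary of a chain supported in
degree `k+1`. -/
theorem arithmeticComplex_exact (K : Type*) [Field K] (w : ℕ → ℕ) (d : ℕ) (hd : 1 ≤ d)
    (hchar : ringChar K = 0 ∨ ∑ i ∈ Finset.range (d + 1), w i < ringChar K) :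
    ∀ (k : ℕ) (x : {J : Finset ℕ // J ⊆ Finset.Icc 1 d} →₀ K),
      (∀ J ∈ x.support, J.1.card = k) →
      bnd K w d x = 0 →
      ∃ y : {J : Finset ℕ // J ⊆ Finset.Icc 1 d} →₀ K,
        (∀ J ∈ y.support, J.1.card = k + 1) ∧ bnd K w d y = x := by
  intro k x hsupp hcyc
  refine ⟨hmt K w d hd x, ?_, ?_⟩
  · intro J' hJ'
    have hrep : hmt K w d hd x = x.sum fun J a => a • hvec K w d hd J := by
      rw [hmt, Finsupp.lsum_apply]
      congr 1
    rw [hrep] at hJ'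
    obtain ⟨J, hJx, hJ'mem⟩ := Finset.mem_biUnion.mp (Finsupp.support_sum hJ')
    have h2 : J' ∈ (hvec K w d hd J).support := Finsupp.support_smul hJ'mem
    by_cases h1 : 1 ∈ J.1
    · rw [hvec, if_pos h1] at h2; simp at h2
    · rw [hvec, if_neg h1] at h2
      have h3 := Finsupp.support_smul h2
      have h4 := Finsupp.support_single_subset h3
      rw [Finset.mem_singleton] at h4
      subst h4
      simp only
      rw [Finset.card_insert_of_notMem h1, hsupp J hJx]
  · have hT := homotopy_eq K w d hd hchar
    have := congrArg (fun f => f x) hT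
    simp only [LinearMap.add_apply, LinearMap.comp_apply, LinearMap.id_apply] at this
    rw [hcyc, map_zero, add_zero] at this
    exact this
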